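/- Let H be a real Hilbert space, let d ≥ 1 and m ≥ 1, let a₁, …, a_d ∈ H, and let φ₁, …, φ_m ∈ H be vectors whose Gram matrix K ∈ ℝ^{m×m}, K_{ij} = ⟪φ_i, φ_j⟫, is invertible. For each l = 1, …, d define v_l ∈ ℝ^m by (v_l)_i = ⟪a_l, φ_i⟫. Then the supremum of Σ_{l=1}^d ⟪g_l, a_l⟫ over all tuples (g₁, …, g_d) ∈ H^d satisfying Σ_{l=1}^d ‖g_l‖² ≤ 1 and ⟪g_l, φ_i⟫ = 0 for all l = 1, …, d and i = 1, …, m, equals sqrt( Σ_{l=1}^d ( ‖a_l‖² − v_lᵀ K⁻¹ v_l ) ). -/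

import Mathlib

open scoped RealInnerProductSpace Matrix

/-- Closed form of the constrained supremum underlying the TKSD (Theorem 5.5):
the supremum of `∑ l, ⟪g l, a l⟫` over tuples `g` in the unit ball of `H^d` that are
orthogonal to all boundary features `φ i` equals
`√(∑ l, ‖a l‖² − vₗᵀ K⁻¹ vₗ)` where `K` is the Gram matrix of the `φ i`. -/
theorem tksd_closed_form
    {H : Type*} [NormedAddCommGroup H] [InnerProductSpace ℝ H] [CompleteSpace H]
    {d m : ℕ} (hd : 1 ≤ d) (hm : 1 ≤ m)
    (a : Fin d → H) (φ : Fin m → H)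
    (K : Matrix (Fin m) (Fin m) ℝ) (hK : ∀ i j, K i j = ⟪φ i, φ j⟫)
    (hKinv : IsUnit K)
    (v : Fin d → Fin m → ℝ) (hv : ∀ l i, v l i = ⟪a l, φ i⟫) :
    sSup {s : ℝ | ∃ g : Fin d → H,
        (∑ l, ‖g l‖ ^ 2 ≤ 1) ∧ (∀ l, ∀ i, ⟪g l, φ i⟫ = 0) ∧ s = ∑ l, ⟪g l, a l⟫}
      = Real.sqrt (∑ l, (‖a l‖ ^ 2 - v l ⬝ᵥ (K⁻¹ *ᵥ v l))) := by
  classical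
  set c : Fin d → Fin m → ℝ := fun l => K⁻¹ *ᵥ v l with hc
  set p : Fin d → H := fun l => ∑ i, c l i • φ i with hp
  set b : Fin d → H := fun l => a l - p l with hb
  have hKdet : IsUnit K.det := (Matrix.isUnit_iff_isUnit_det K).1 hKinv
  have hKc : ∀ l, K *ᵥ c l = v l := fun l => by
    rw [hc, Matrix.mulVec_mulVec, Matrix.mul_nonsing_inv K hKdet, Matrix.one_mulVec]
  -- orthogonality of b l to all φ j
  have hpφ : ∀ l j, ⟪p l, φ j⟫ = v l j := by
    intro l j
    have : ⟪p l, φ j⟫ = (K *ᵥ c l) j := by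
      rw [hp]
      simp only [sum_inner, real_inner_smul_left, Matrix.mulVec, dotProduct]
      refine Finset.sum_congr rfl fun i _ => ?_
      rw [hK j i, real_inner_comm (φ j) (φ i), mul_comm]
    rw [this, hKc]
  have hborth : ∀ l j, ⟪b l, φ j⟫ = 0 := by
    intro l j
    rw [hb]
    simp only [inner_sub_left, hpφ, hv]
    ring
  -- inner of anything orthogonal to all φ with p l is 0
  have hip : ∀ (x : H), (∀ j, ⟪x, φ j⟫ = 0) → ∀ l, ⟪x, p l⟫ = 0 := by
    intro x hx l
    rw [hp]
    simp [inner_sum, real_inner_smul_right, hx]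
  -- ⟪b l, a l⟫ = ‖b l‖²
  have hba : ∀ l, ⟪b l, a l⟫ = ‖b l‖ ^ 2 := by
    intro l
    have h1 : ⟪b l, b l⟫ = ⟪b l, a l⟫ - ⟪b l, p l⟫ := by
      rw [hb]; simp only [inner_sub_right]
    rw [← real_inner_self_eq_norm_sq, h1, hip (b l) (hborth l) l, sub_zero]
  -- ‖b l‖² = ‖a l‖² - v l ⬝ᵥ K⁻¹ *ᵥ v l
  have hbn : ∀ l, ‖b l‖ ^ 2 = ‖a l‖ ^ 2 - v l ⬝ᵥ (K⁻¹ *ᵥ v l) := by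
    intro l
    have h1 : ⟪b l, a l⟫ = ‖a l‖ ^ 2 - ⟪p l, a l⟫ := by
      rw [hb, inner_sub_left, real_inner_self_eq_norm_sq]
    have h2 : ⟪p l, a l⟫ = v l ⬝ᵥ (K⁻¹ *ᵥ v l) := by
      show ⟪p l, a l⟫ = v l ⬝ᵥ c l
      rw [hp]
      simp only [sum_inner, real_inner_smul_left]
      rw [dotProduct_comm, dotProduct]
      refine Finset.sum_congr rfl fun i _ => ?_
      rw [real_inner_comm, ← hv]
    rw [← hba l, h1, h2]
  set T : ℝ := ∑ l, (‖a l‖ ^ 2 - v l ⬝ᵥ (K⁻¹ *ᵥ v l)) with hT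
  have hTb : T = ∑ l, ‖b l‖ ^ 2 := by
    rw [hT]; exact (Finset.sum_congr rfl fun l _ => (hbn l).symm)
  have hT0 : 0 ≤ T := by
    rw [hTb]; exact Finset.sum_nonneg fun l _ => by positivity
  -- for feasible g, the objective equals ∑ ⟪g l, b l⟫
  have hobj : ∀ (g : Fin d → H), (∀ l i, ⟪g l, φ i⟫ = 0) →
      ∑ l, ⟪g l, a l⟫ = ∑ l, ⟪g l, b l⟫ := by
    intro g hg
    refine Finset.sum_congr rfl fun l _ => ?_
    have : ⟪g l, b l⟫ = ⟪g l, a l⟫ - ⟪g l, p l⟫ := by rw [hb]; simp [inner_sub_right]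
    rw [this, hip (g l) (hg l) l, sub_zero]
  apply IsGreatest.csSup_eq
  constructor
  · -- membership: the supremum is attained
    by_cases hTz : T = 0
    · refine ⟨fun _ => 0, ?_, ?_, ?_⟩ <;> simp [hTz]
    · have hTpos : 0 < T := lt_of_le_of_ne hT0 (Ne.symm hTz)
      have hsT : Real.sqrt T > 0 := Real.sqrt_pos.2 hTpos
      refine ⟨fun l => (Real.sqrt T)⁻¹ • b l, ?_, ?_, ?_⟩
      · have : ∀ l, ‖(Real.sqrt T)⁻¹ • b l‖ ^ 2 = T⁻¹ * ‖b l‖ ^ 2 := by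
          intro l
          rw [norm_smul, Real.norm_eq_abs, mul_pow, sq_abs, ← Real.sqrt_inv,
            Real.sq_sqrt (by positivity)]
        rw [Finset.sum_congr rfl fun l _ => this l, ← Finset.mul_sum, ← hTb,
          inv_mul_cancel₀ hTz]
      · intro l i
        rw [real_inner_smul_left, hborth l i, mul_zero]
      · have : ∀ l, ⟪(Real.sqrt T)⁻¹ • b l, a l⟫ = (Real.sqrt T)⁻¹ * ‖b l‖ ^ 2 := by
          intro l; rw [real_inner_smul_left, hba l]
        rw [Finset.sum_congr rfl fun l _ => this l, ← Finset.mul_sum, ← hTb]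
        rw [eq_comm, inv_mul_eq_iff_eq_mul₀ (ne_of_gt hsT),
          Real.mul_self_sqrt hT0]
  · -- upper bound
    rintro s ⟨g, hg1, hg2, rfl⟩
    rw [hobj g hg2]
    calc ∑ l, ⟪g l, b l⟫ ≤ ∑ l, ‖g l‖ * ‖b l‖ :=
          Finset.sum_le_sum fun l _ => real_inner_le_norm _ _
      _ ≤ Real.sqrt (∑ l, ‖g l‖ ^ 2) * Real.sqrt (∑ l, ‖b l‖ ^ 2) :=
          Real.sum_mul_le_sqrt_mul_sqrt _ _ _
      _ ≤ 1 * Real.sqrt T := by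
          rw [← hTb]
          exact mul_le_mul_of_nonneg_right
            (by simpa using Real.sqrt_le_sqrt hg1) (Real.sqrt_nonneg _)
      _ = Real.sqrt T := one_mul _
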